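/- The function F(b) = φ(b)/Φ(−b) − b tends to 0 as b tends to +∞; that is, lim_{b→∞} F(b) = 0. -/

import Mathlib

open MeasureTheory Filter
open Set

/-- Standard normal density. -/
noncomputable def phi (x : ℝ) : ℝ := Real.exp (-x ^ 2 / 2) / Real.sqrt (2 * Real.pi)

/-- Standard normal cumulative distribution function. -/
noncomputable def Phi (x : ℝ) : ℝ := ∫ t in Set.Iio x, phi t

lemma phi_pos (x : ℝ) : 0 < phi x := by
  have h : 0 < Real.sqrt (2 * Real.pi) := Real.sqrt_pos.2 (by positivity)
  exact div_pos (Real.exp_pos _) h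

lemma phi_neg (x : ℝ) : phi (-x) = phi x := by simp [phi]

lemma hasDerivAt_phi (x : ℝ) : HasDerivAt phi (-x * phi x) x := by
  have h1 : HasDerivAt (fun x : ℝ => -x ^ 2 / 2) (-x) x := by
    have := ((hasDerivAt_pow 2 x).neg).div_const 2
    simpa using this.congr_deriv (by ring)
  have h2 := (Real.hasDerivAt_exp (-x ^ 2 / 2)).comp x h1
  have h3 := h2.div_const (Real.sqrt (2 * Real.pi))
  exact h3.congr_deriv (by unfold phi; ring)

lemma tendsto_phi_atTop : Tendsto phi atTop (nhds 0) := by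
  have h1 : Tendsto (fun x : ℝ => -x ^ 2 / 2) atTop atBot := by
    apply Filter.Tendsto.atBot_div_const (by norm_num)
    exact tendsto_neg_atBot_iff.2 (tendsto_pow_atTop (by norm_num))
  have h2 := (Real.tendsto_exp_atBot.comp h1).div_const (Real.sqrt (2 * Real.pi))
  simp only [Function.comp_def] at h2
  rw [zero_div] at h2; exact h2

lemma integrable_phi : Integrable phi := by
  have h := (integrable_exp_neg_mul_sq (b := (1:ℝ)/2) (by norm_num)).div_const
    (Real.sqrt (2 * Real.pi))
  convert h using 2 with x
  unfold phi; ring_nf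

lemma tendsto_neg_phi : Tendsto (fun t => -phi t) atTop (nhds 0) := by
  simpa using tendsto_phi_atTop.neg

lemma integrableOn_id_mul_phi {b : ℝ} (hb : 0 < b) :
    IntegrableOn (fun t => t * phi t) (Ioi b) := by
  apply integrableOn_Ioi_deriv_of_nonneg' (g := fun t => -phi t)
    (fun x _ => by have h := (hasDerivAt_phi x).neg; simp only [neg_mul, neg_neg] at h; exact h)
    (fun x hx => mul_nonneg (le_of_lt (hb.trans hx)) (phi_pos x).le)
    tendsto_neg_phi

lemma integral_id_mul_phi {b : ℝ} (hb : 0 < b) :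
    ∫ t in Ioi b, t * phi t = phi b := by
  have := integral_Ioi_of_hasDerivAt_of_nonneg' (g := fun t => -phi t)
    (g' := fun t => t * phi t) (a := b)
    (fun x _ => by have h := (hasDerivAt_phi x).neg; simp only [neg_mul, neg_neg] at h; exact h)
    (fun x hx => mul_nonneg (le_of_lt (hb.trans hx)) (phi_pos x).le)
    tendsto_neg_phi
  simpa using this

lemma Phi_neg_eq (b : ℝ) : Phi (-b) = ∫ t in Ioi b, phi t := by
  unfold Phi
  rw [← integral_Iic_eq_integral_Iio, ← integral_comp_neg_Ioi]
  simp [phi_neg]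

lemma Phi_le {b : ℝ} (hb : 0 < b) : b * Phi (-b) ≤ phi b := by
  rw [Phi_neg_eq, ← integral_const_mul, ← integral_id_mul_phi hb]
  apply setIntegral_mono_on (integrable_phi.integrableOn.const_mul b)
    (integrableOn_id_mul_phi hb) measurableSet_Ioi
  intro x hx
  exact mul_le_mul_of_nonneg_right (le_of_lt hx) (phi_pos x).le

lemma hasDerivAt_G {x : ℝ} (hx : x ≠ 0) :
    HasDerivAt (fun t => ((t ^ 3)⁻¹ - t⁻¹) * phi t)
      ((1 - 3 * (x ^ 4)⁻¹) * phi x) x := by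
  have a1 : HasDerivAt (fun t : ℝ => (t ^ 3)⁻¹) (-(3 * x ^ 2) / (x ^ 3) ^ 2) x := by
    exact (hasDerivAt_pow 3 x).inv (pow_ne_zero 3 hx)
  have a2 := hasDerivAt_inv hx
  have h := (a1.sub a2).mul (hasDerivAt_phi x)
  exact h.congr_deriv (by simp only [Pi.sub_apply]; field_simp; ring)

lemma tendsto_G : Tendsto (fun t => ((t ^ 3)⁻¹ - t⁻¹) * phi t) atTop (nhds 0) := by
  have h1 : Tendsto (fun t : ℝ => (t ^ 3)⁻¹) atTop (nhds 0) := by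
    apply Tendsto.inv_tendsto_atTop
    exact tendsto_pow_atTop (by norm_num)
  have h2 : Tendsto (fun t : ℝ => t⁻¹) atTop (nhds (0:ℝ)) := tendsto_inv_atTop_zero
  simpa using (h1.sub h2).mul tendsto_phi_atTop

lemma Gderiv_nonneg {b : ℝ} (hb : 2 ≤ b) {x : ℝ} (hx : x ∈ Ioi b) :
    0 ≤ (1 - 3 * (x ^ 4)⁻¹) * phi x := by
  have hx2 : 2 < x := lt_of_le_of_lt hb hx
  have h4 : (16 : ℝ) ≤ x ^ 4 := by
    have hsq : (4 : ℝ) ≤ x ^ 2 := by nlinarith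
    nlinarith
  have : 3 * (x ^ 4)⁻¹ ≤ 1 := by
    rw [mul_inv_le_iff₀ (by linarith)]
    linarith
  exact mul_nonneg (by linarith) (phi_pos x).le

lemma integrableOn_Gderiv {b : ℝ} (hb : 2 ≤ b) :
    IntegrableOn (fun t => (1 - 3 * (t ^ 4)⁻¹) * phi t) (Ioi b) := by
  apply integrableOn_Ioi_deriv_of_nonneg'
    (fun x hx => hasDerivAt_G (by intro h; rw [h] at hx; simp at hx; linarith))
    (fun x hx => Gderiv_nonneg hb hx) tendsto_G

lemma integral_Gderiv {b : ℝ} (hb : 2 ≤ b) :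
    ∫ t in Ioi b, (1 - 3 * (t ^ 4)⁻¹) * phi t = (b⁻¹ - (b ^ 3)⁻¹) * phi b := by
  have := integral_Ioi_of_hasDerivAt_of_nonneg' (a := b)
    (fun x hx => hasDerivAt_G (by intro h; rw [h] at hx; simp at hx; linarith))
    (fun x hx => Gderiv_nonneg hb hx) tendsto_G
  rw [this]; ring

lemma Phi_ge {b : ℝ} (hb : 2 ≤ b) : (b⁻¹ - (b ^ 3)⁻¹) * phi b ≤ Phi (-b) := by
  rw [Phi_neg_eq, ← integral_Gderiv hb]
  apply setIntegral_mono_on (integrableOn_Gderiv hb)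
    integrable_phi.integrableOn measurableSet_Ioi
  intro x hx
  have hx2 : (2 : ℝ) < x := lt_of_le_of_lt hb hx
  have h1 : 1 - 3 * (x ^ 4)⁻¹ ≤ 1 := by
    have : 0 ≤ 3 * (x ^ 4)⁻¹ := by positivity
    linarith
  calc (1 - 3 * (x ^ 4)⁻¹) * phi x ≤ 1 * phi x :=
        mul_le_mul_of_nonneg_right h1 (phi_pos x).le
    _ = phi x := one_mul _

/-- Mills-type ratio. -/
noncomputable def r (b : ℝ) : ℝ := phi b / Phi (-b)

/-- The deficit transformation `F`. -/
noncomputable def F (b : ℝ) : ℝ := phi b / Phi (-b) - b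

/-- `F(b) → 0` as `b → ∞`. -/
theorem F_tendsto_atTop : Tendsto F atTop (nhds 0) := by
  have key : ∀ b : ℝ, 2 ≤ b → 0 ≤ F b ∧ F b ≤ b / (b ^ 2 - 1) := by
    intro b hb
    have hb0 : (0:ℝ) < b := by linarith
    have hne : b ^ 2 - 1 ≠ 0 := by nlinarith
    have hup := Phi_le hb0
    have hlow := Phi_ge hb
    have hc : 0 < b⁻¹ - (b ^ 3)⁻¹ := by
      rw [sub_pos]
      have h3 : b < b ^ 3 := by nlinarith [mul_lt_mul_of_pos_left (show (1:ℝ) < b ^ 2 by nlinarith) hb0]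
      exact inv_strictAnti₀ hb0 h3
    have hpos : 0 < Phi (-b) :=
      lt_of_lt_of_le (mul_pos hc (phi_pos b)) hlow
    have hsq : (0:ℝ) < b ^ 2 - 1 := by nlinarith
    constructor
    · unfold F
      rw [sub_nonneg, le_div_iff₀ hpos]
      linarith
    · unfold F
      rw [sub_le_iff_le_add, div_le_iff₀ hpos]
      have hcoef : 0 < b / (b ^ 2 - 1) + b := by positivity
      have h2 : (b / (b ^ 2 - 1) + b) * ((b⁻¹ - (b ^ 3)⁻¹) * phi b) = phi b := by
        field_simp
        ring
      calc phi b = (b / (b ^ 2 - 1) + b) * ((b⁻¹ - (b ^ 3)⁻¹) * phi b) := h2.symm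
        _ ≤ (b / (b ^ 2 - 1) + b) * Phi (-b) :=
            mul_le_mul_of_nonneg_left hlow hcoef.le
  have hupper : Tendsto (fun b : ℝ => b / (b ^ 2 - 1)) atTop (nhds 0) := by
    have h : Tendsto (fun b : ℝ => (b ^ 2 - 1) / b) atTop atTop := by
      apply tendsto_atTop_mono' atTop ?_
        (tendsto_atTop_add_const_right atTop (-1) tendsto_id)
      filter_upwards [eventually_ge_atTop (2:ℝ)] with b hb
      have hb0 : (0:ℝ) < b := by linarith
      simp only [id_eq]
      rw [le_div_iff₀ hb0]
      nlinarith
    have h2 := h.inv_tendsto_atTop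
    rw [show (fun b : ℝ => (b ^ 2 - 1) / b)⁻¹ = fun b : ℝ => b / (b ^ 2 - 1) from
      funext fun b => by simp [Pi.inv_apply, inv_div]] at h2
    exact h2
  apply tendsto_of_tendsto_of_tendsto_of_le_of_le' tendsto_const_nhds hupper
  · filter_upwards [eventually_ge_atTop (2:ℝ)] with b hb
    exact (key b hb).1
  · filter_upwards [eventually_ge_atTop (2:ℝ)] with b hb
    exact (key b hb).2
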